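/- (Correctness of the parallel step of the parallel replica algorithm.) Let N ≥ 1, let S be a measurable space, and let (T_i, Y_i)_{1 ≤ i ≤ N} be i.i.d. random pairs with values in (0,∞) × S such that T_i is exponentially distributed with rate λ₁ > 0 and T_i is independent of Y_i. Let I be the (almost surely unique) index at which min_{1 ≤ i ≤ N} T_i is attained. Then the pair (N · T_I, Y_I) has the same law as (T_1, Y_1); in particular N · T_I is exponentially distributed with rate λ₁, Y_I has the same law as Y_1, and N · T_I is independent of Y_I. -/

import Mathlib

open MeasureTheory ProbabilityTheory
open scoped ENNReal

/-- **Correctness of the parallel step of the parallel replica algorithm.** Let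
`(T_i, Y_i)_{1 ≤ i ≤ N}` be i.i.d. random pairs with values in `(0,∞) × S`, with `T_i`
exponentially distributed with rate `λ₁ > 0` (that is, `ℙ(T_i > t) = e^{−λ₁ t}` for `t ≥ 0`)
and `T_i` independent of `Y_i`. If `I` is the (a.s. unique) index realizing
`min_{1 ≤ i ≤ N} T_i`, then `(N⋅T_I, Y_I)` has the same law as `(T_1, Y_1)`; in particular
`N⋅T_I` is exponential with rate `λ₁`, `Y_I` has the same law as `Y_1`, and `N⋅T_I` is
independent of `Y_I`. -/
theorem parallel_replica_parallel_step
    {Ω : Type*} [MeasurableSpace Ω] (P : Measure Ω) [IsProbabilityMeasure P]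
    {S : Type*} [MeasurableSpace S]
    (N : ℕ) (hN : 1 ≤ N) (lam₁ : ℝ) (hlam : 0 < lam₁)
    (T : Fin N → Ω → ℝ) (Y : Fin N → Ω → S)
    (hTmeas : ∀ i, Measurable (T i)) (hYmeas : ∀ i, Measurable (Y i))
    -- the pairs take values in `(0,∞) × S`
    (hTpos : ∀ i ω, 0 < T i ω)
    -- the pairs `(T_i, Y_i)` are independent ...
    (hindep : iIndepFun
      (fun i => fun ω => (T i ω, Y i ω)) P)
    -- ... and identically distributed
    (hid : ∀ i, Measure.map (fun ω => (T i ω, Y i ω)) P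
      = Measure.map (fun ω => (T ⟨0, hN⟩ ω, Y ⟨0, hN⟩ ω)) P)
    -- each `T_i` is exponentially distributed with rate `λ₁`
    (hexp : ∀ i, ∀ t ≥ (0:ℝ), P {ω | t < T i ω} = ENNReal.ofReal (Real.exp (-lam₁ * t)))
    -- `T_i` is independent of `Y_i`
    (hTY : ∀ i, IndepFun (T i) (Y i) P)
    -- `I` selects the index at which the minimum of the `T_i` is attained (a.s. unique)
    (I : Ω → Fin N) (hImeas : Measurable I)
    (hI : ∀ᵐ ω ∂P, ∀ i, T (I ω) ω ≤ T i ω)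
    (hIunique : ∀ᵐ ω ∂P, ∀ i, i ≠ I ω → T (I ω) ω < T i ω) :
    Measure.map (fun ω => ((N : ℝ) * T (I ω) ω, Y (I ω) ω)) P
        = Measure.map (fun ω => (T ⟨0, hN⟩ ω, Y ⟨0, hN⟩ ω)) P
      ∧ (∀ t ≥ (0:ℝ), P {ω | t < (N : ℝ) * T (I ω) ω}
          = ENNReal.ofReal (Real.exp (-lam₁ * t)))
      ∧ Measure.map (fun ω => Y (I ω) ω) P = Measure.map (Y ⟨0, hN⟩) P
      ∧ IndepFun (fun ω => (N : ℝ) * T (I ω) ω) (fun ω => Y (I ω) ω) P := by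
  classical
  have hNR : (1:ℝ) ≤ (N:ℝ) := by exact_mod_cast hN
  have hNpos : (0:ℝ) < (N:ℝ) := by linarith
  set i0 : Fin N := ⟨0, hN⟩ with hi0
  set X : Fin N → Ω → ℝ × S := fun i ω => (T i ω, Y i ω) with hXdef
  have hXmeas : ∀ i, Measurable (X i) := fun i => (hTmeas i).prodMk (hYmeas i)
  set μT : Measure ℝ := Measure.map (T i0) P with hμTdef
  set ν : Measure S := Measure.map (Y i0) P with hνdef
  have hνprob : IsProbabilityMeasure ν := Measure.isProbabilityMeasure_map (hYmeas i0).aemeasurable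
  have hμTprob : IsProbabilityMeasure μT := Measure.isProbabilityMeasure_map (hTmeas i0).aemeasurable
  -- the joint law of `(T_0, Y_0)` is a product law
  have hμ_prod : Measure.map (X i0) P = μT.prod ν :=
    (indepFun_iff_map_prod_eq_prod_map_map (hTmeas i0).aemeasurable
      (hYmeas i0).aemeasurable).mp (hTY i0)
  -- the survival function of `μT`
  have hμT_Ioi : ∀ a : ℝ, μT (Set.Ioi a) = ENNReal.ofReal (Real.exp (-lam₁ * max a 0)) := by
    intro a
    rw [hμTdef, Measure.map_apply (hTmeas i0) measurableSet_Ioi]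
    rcases le_or_gt 0 a with ha | ha
    · rw [max_eq_left ha]; exact hexp i0 a ha
    · rw [max_eq_right ha.le]
      have huniv : T i0 ⁻¹' Set.Ioi a = Set.univ := by
        ext ω
        simp only [Set.mem_preimage, Set.mem_Ioi, Set.mem_univ, iff_true]
        exact lt_trans ha (hTpos i0 ω)
      rw [huniv]
      simp [measure_univ]
  -- `expMeasure` basics
  have hexpM : expMeasure lam₁ = volume.withDensity (exponentialPDF lam₁) := rfl
  have hexpMprob : IsProbabilityMeasure (expMeasure lam₁) := isProbabilityMeasure_expMeasure hlam
  have hexpM_Ioi : ∀ a : ℝ,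
      expMeasure lam₁ (Set.Ioi a) = ENNReal.ofReal (Real.exp (-lam₁ * max a 0)) := by
    intro a
    have hIic : expMeasure lam₁ (Set.Iic a)
        = ENNReal.ofReal (if 0 ≤ a then 1 - Real.exp (-(lam₁ * a)) else 0) := by
      rw [hexpM, withDensity_apply _ measurableSet_Iic]
      exact lintegral_exponentialPDF_eq_antiDeriv hlam a
    have h1 : Set.Ioi a = (Set.Iic a)ᶜ := (Set.compl_Iic).symm
    rw [h1, measure_compl measurableSet_Iic (measure_ne_top _ _), measure_univ, hIic]
    rcases le_or_gt 0 a with ha | ha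
    · rw [if_pos ha, max_eq_left ha]
      have he1 : Real.exp (-(lam₁ * a)) ≤ 1 := by
        rw [Real.exp_le_one_iff]; nlinarith
      refine ENNReal.sub_eq_of_eq_add ENNReal.ofReal_ne_top ?_
      rw [← ENNReal.ofReal_add (Real.exp_pos _).le (by linarith)]
      rw [show Real.exp (-lam₁ * a) + (1 - Real.exp (-(lam₁ * a))) = 1 by
        rw [neg_mul]; ring]
      exact ENNReal.ofReal_one.symm
    · rw [if_neg (not_le.mpr ha), max_eq_right ha.le]
      simp
  -- identification of the law of `T_0`
  have hμT_eq : μT = expMeasure lam₁ := by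
    refine ext_of_generate_finite (Set.range Set.Ioi)
      (BorelSpace.measurable_eq.trans (borel_eq_generateFrom_Ioi ℝ)) ?_ ?_ ?_
    · rintro s ⟨a, rfl⟩ t ⟨b, rfl⟩ -
      exact ⟨a ⊔ b, (Set.Ioi_inter_Ioi).symm⟩
    · rintro s ⟨a, rfl⟩
      rw [hμT_Ioi, hexpM_Ioi]
    · simp [measure_univ]
  -- independence of the `T_i`
  have hTindep : iIndepFun T P := by
    have h := hindep.comp (fun _ => Prod.fst) (fun _ => measurable_fst)
    exact h
  -- the damped scaled density integrates against `μT` like `μT` itself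
  set c : ℝ := ((N:ℝ) - 1) * lam₁ with hc
  set e2 : ℝ → ℝ≥0∞ := fun t => ENNReal.ofReal (Real.exp (-c * t)) with he2
  have he2meas : Measurable e2 := by
    apply Measurable.ennreal_ofReal
    exact (measurable_id.const_mul (-c)).exp
  have hkey : ∀ A : Set ℝ, MeasurableSet A →
      (N : ℝ≥0∞) * ∫⁻ t, Set.indicator {u : ℝ | (N:ℝ) * u ∈ A} e2 t ∂μT = μT A := by
    intro A hA
    have hNmul : Measurable fun u : ℝ => (N:ℝ) * u := measurable_id.const_mul _
    have hAset : MeasurableSet {u : ℝ | (N:ℝ) * u ∈ A} := hNmul hA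
    have hpdfmeas : Measurable (exponentialPDF lam₁) :=
      (measurable_exponentialPDFReal lam₁).ennreal_ofReal
    have hindmeas : Measurable (Set.indicator A (exponentialPDF lam₁)) :=
      hpdfmeas.indicator hA
    rw [hμT_eq, hexpM, lintegral_withDensity_eq_lintegral_mul _ hpdfmeas
      (he2meas.indicator hAset)]
    have hpt : (fun t => (exponentialPDF lam₁ * fun t => Set.indicator
        {u : ℝ | (N:ℝ) * u ∈ A} e2 t) t)
        = fun t => Set.indicator A (exponentialPDF lam₁) ((N:ℝ) * t) := by
      funext t
      by_cases hmem : (N:ℝ) * t ∈ A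
      · rw [Pi.mul_apply, Set.indicator_of_mem hmem,
          Set.indicator_of_mem (show t ∈ {u : ℝ | (N:ℝ) * u ∈ A} from hmem) e2]
        rcases le_or_gt 0 t with ht | ht
        · rw [exponentialPDF_of_nonneg ht, exponentialPDF_of_nonneg (by positivity),
            he2, ← ENNReal.ofReal_mul (by positivity)]
          congr 1
          rw [mul_assoc, ← Real.exp_add]
          congr 1
          rw [hc]; ring
        · rw [exponentialPDF_of_neg ht, exponentialPDF_of_neg (by nlinarith), zero_mul]
      · rw [Pi.mul_apply, Set.indicator_of_notMem hmem,
          Set.indicator_of_notMem (show t ∉ {u : ℝ | (N:ℝ) * u ∈ A} from hmem) e2,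
          mul_zero]
    rw [hpt]
    rw [show (fun t => Set.indicator A (exponentialPDF lam₁) ((N:ℝ) * t))
        = fun t => Set.indicator A (exponentialPDF lam₁) (((fun u : ℝ => (N:ℝ) * u)) t) from rfl]
    rw [← lintegral_map hindmeas hNmul, Real.map_volume_mul_left (ne_of_gt hNpos),
      lintegral_smul_measure, smul_eq_mul, ← mul_assoc]
    have hone : (N : ℝ≥0∞) * ENNReal.ofReal |((N:ℝ))⁻¹| = 1 := by
      rw [abs_of_nonneg (by positivity), ← ENNReal.ofReal_natCast,
        ← ENNReal.ofReal_mul (by positivity), mul_inv_cancel₀ (ne_of_gt hNpos),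
        ENNReal.ofReal_one]
    rw [hone, one_mul, lintegral_indicator hA, ← withDensity_apply _ hA]
  -- the key per-index computation
  have hG : ∀ (i : Fin N) (A : Set ℝ) (B : Set S), MeasurableSet A → MeasurableSet B →
      P {ω | ((N:ℝ) * T i ω ∈ A ∧ Y i ω ∈ B) ∧ ∀ j, j ≠ i → T i ω < T j ω}
        = ∫⁻ x : ℝ × S, Set.indicator {u : ℝ | (N:ℝ) * u ∈ A} e2 x.1
            * Set.indicator B 1 x.2 ∂(μT.prod ν) := by
    intro i A B hA hB
    set Tc : Finset (Fin N) := {i}ᶜ with hTc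
    set W : Ω → (Tc → ℝ × S) := fun ω j => X (j : Fin N) ω with hW
    have hWmeas : Measurable W := measurable_pi_lambda _ fun j => hXmeas j
    have hIndepiW : IndepFun (X i) W P := by
      have h := hindep.indepFun_finset {i} ({i}ᶜ) disjoint_compl_right hXmeas
      have h2 := h.comp (φ := fun v : (({i} : Finset (Fin N)) → ℝ × S) =>
        v ⟨i, Finset.mem_singleton_self i⟩) (ψ := id) (_mγ := inferInstance) (_mγ' := inferInstance)
        (measurable_pi_apply _) measurable_id
      exact h2
    set C : Set ((ℝ × S) × (Tc → ℝ × S)) :=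
      {p | ((N:ℝ) * p.1.1 ∈ A ∧ p.1.2 ∈ B) ∧ ∀ j : Tc, p.1.1 < (p.2 j).1} with hC
    have hCmeas : MeasurableSet C := by
      have h1 : MeasurableSet {p : (ℝ × S) × (Tc → ℝ × S) | (N:ℝ) * p.1.1 ∈ A} :=
        ((measurable_fst.fst).const_mul _) hA
      have h2 : MeasurableSet {p : (ℝ × S) × (Tc → ℝ × S) | p.1.2 ∈ B} :=
        (measurable_fst.snd) hB
      have h3 : MeasurableSet {p : (ℝ × S) × (Tc → ℝ × S) | ∀ j : Tc, p.1.1 < (p.2 j).1} := by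
        rw [show {p : (ℝ × S) × (Tc → ℝ × S) | ∀ j : Tc, p.1.1 < (p.2 j).1}
            = ⋂ j : Tc, {p : (ℝ × S) × (Tc → ℝ × S) | p.1.1 < (p.2 j).1} from by
          ext p; simp [Set.mem_iInter]]
        exact MeasurableSet.iInter fun j =>
          measurableSet_lt measurable_fst.fst
            (((measurable_pi_apply j).comp measurable_snd).fst)
      exact (h1.inter h2).inter h3
    have hpre : {ω | ((N:ℝ) * T i ω ∈ A ∧ Y i ω ∈ B) ∧ ∀ j, j ≠ i → T i ω < T j ω}
        = (fun ω => (X i ω, W ω)) ⁻¹' C := by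
      ext ω
      simp only [Set.mem_setOf_eq, Set.mem_preimage, hC, hW, hXdef]
      constructor
      · rintro ⟨⟨h1, h2⟩, h3⟩
        refine ⟨⟨h1, h2⟩, fun j => ?_⟩
        exact h3 j (Finset.notMem_singleton.mp (Finset.mem_compl.mp j.2))
      · rintro ⟨⟨h1, h2⟩, h3⟩
        refine ⟨⟨h1, h2⟩, fun j hj => ?_⟩
        exact h3 ⟨j, Finset.mem_compl.mpr (Finset.notMem_singleton.mpr hj)⟩
    rw [hpre, ← Measure.map_apply ((hXmeas i).prodMk hWmeas) hCmeas,
      (indepFun_iff_map_prod_eq_prod_map_map (hXmeas i).aemeasurable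
        hWmeas.aemeasurable).mp hIndepiW, hid i, hμ_prod, Measure.prod_apply hCmeas]
    -- a.e. in the product law, the first coordinate is positive
    have hae : ∀ᵐ x : ℝ × S ∂(μT.prod ν), 0 < x.1 := by
      rw [ae_iff]
      have hset : {x : ℝ × S | ¬ 0 < x.1} = Set.Iic 0 ×ˢ Set.univ := by
        ext x; simp [not_lt]
      rw [hset, Measure.prod_prod, measure_univ, mul_one]
      have h1 : μT (Set.Ioi (0:ℝ)) = 1 := by rw [hμT_Ioi]; simp
      have h2 := measure_compl (measurableSet_Ioi (a := (0:ℝ))) (measure_ne_top μT _)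
      rw [measure_univ, h1, Set.compl_Ioi] at h2
      simpa using h2
    refine lintegral_congr_ae (hae.mono fun x hx => ?_)
    dsimp only
    by_cases hmem : (N:ℝ) * x.1 ∈ A ∧ x.2 ∈ B
    · have hslice : Prod.mk x ⁻¹' C = {w : Tc → ℝ × S | ∀ j : Tc, x.1 < (w j).1} := by
        ext w
        simp only [Set.mem_preimage, hC, Set.mem_setOf_eq]
        tauto
      have hsm : MeasurableSet {w : Tc → ℝ × S | ∀ j : Tc, x.1 < (w j).1} := by
        rw [show {w : Tc → ℝ × S | ∀ j : Tc, x.1 < (w j).1}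
            = ⋂ j : Tc, (fun w : Tc → ℝ × S => (w j).1) ⁻¹' Set.Ioi x.1 from by
          ext w; simp [Set.mem_iInter]]
        exact MeasurableSet.iInter fun j =>
          ((measurable_pi_apply j).fst) measurableSet_Ioi
      rw [hslice, Measure.map_apply hWmeas hsm]
      have hsetW : W ⁻¹' {w : Tc → ℝ × S | ∀ j : Tc, x.1 < (w j).1}
          = ⋂ j ∈ Tc, T j ⁻¹' Set.Ioi x.1 := by
        ext ω
        simp only [Set.mem_preimage, Set.mem_setOf_eq, Set.mem_iInter, hW, hXdef]
        constructor
        · intro h j hj; exact h ⟨j, hj⟩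
        · intro h j; exact h j j.2
      rw [hsetW, hTindep.measure_inter_preimage_eq_mul Tc
        (sets := fun _ => Set.Ioi x.1) (fun _ _ => measurableSet_Ioi)]
      have hprod : ∏ j ∈ Tc, P (T j ⁻¹' Set.Ioi x.1)
          = ENNReal.ofReal (Real.exp (-lam₁ * x.1)) ^ (N - 1) := by
        have hval : ∀ j ∈ Tc, P (T j ⁻¹' Set.Ioi x.1)
            = ENNReal.ofReal (Real.exp (-lam₁ * x.1)) := fun j _ => hexp j x.1 hx.le
        rw [Finset.prod_congr rfl hval, Finset.prod_const]
        congr 1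
        rw [hTc, Finset.card_compl, Finset.card_singleton, Fintype.card_fin]
      rw [hprod]
      have hpow : ENNReal.ofReal (Real.exp (-lam₁ * x.1)) ^ (N - 1) = e2 x.1 := by
        rw [he2, ← ENNReal.ofReal_pow (Real.exp_pos _).le, ← Real.exp_nat_mul]
        congr 2
        rw [Nat.cast_sub hN, hc]
        push_cast
        ring
      rw [hpow, Set.indicator_of_mem (show x.1 ∈ {u : ℝ | (N:ℝ) * u ∈ A} from hmem.1) e2,
        Set.indicator_of_mem hmem.2, Pi.one_apply, mul_one]
    · have hslice : Prod.mk x ⁻¹' C = ∅ := by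
        ext w
        simp only [Set.mem_preimage, hC, Set.mem_setOf_eq, Set.mem_empty_iff_false,
          iff_false]
        tauto
      rw [hslice, measure_empty]
      rcases not_and_or.mp hmem with h | h
      · rw [Set.indicator_of_notMem (show x.1 ∉ {u : ℝ | (N:ℝ) * u ∈ A} from h) e2,
          zero_mul]
      · rw [Set.indicator_of_notMem h, mul_zero]
  -- measurability of the selected variables
  have hTI : Measurable fun ω => T (I ω) ω := by
    have h1 : Measurable fun p : Ω × Fin N => T p.2 p.1 :=
      measurable_from_prod_countable_left fun i => hTmeas i
    exact h1.comp (measurable_id.prodMk hImeas)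
  have hYI : Measurable fun ω => Y (I ω) ω := by
    have h1 : Measurable fun p : Ω × Fin N => Y p.2 p.1 :=
      measurable_from_prod_countable_left fun i => hYmeas i
    exact h1.comp (measurable_id.prodMk hImeas)
  set Z : Ω → ℝ × S := fun ω => ((N:ℝ) * T (I ω) ω, Y (I ω) ω) with hZ
  have hZmeas : Measurable Z := (hTI.const_mul _).prodMk hYI
  -- a.e. characterization of `I`
  have hae_iff : ∀ᵐ ω ∂P, ∀ i : Fin N, I ω = i ↔ ∀ j, j ≠ i → T i ω < T j ω := by
    filter_upwards [hI, hIunique] with ω h1 h2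
    intro i
    constructor
    · rintro rfl
      exact fun j hj => h2 j hj
    · intro h
      by_contra hne
      have hlt : T i ω < T (I ω) ω := h (I ω) hne
      have hle : T (I ω) ω ≤ T i ω := h1 i
      linarith
  -- the main law identity
  have hmain : Measure.map Z P = μT.prod ν := by
    haveI hZprob : IsProbabilityMeasure (Measure.map Z P) :=
      Measure.isProbabilityMeasure_map hZmeas.aemeasurable
    refine ext_of_generate_finite _ generateFrom_prod.symm isPiSystem_prod ?_ (by simp)
    rintro s ⟨A, hA, B, hB, rfl⟩
    simp only [Set.mem_setOf_eq] at hA hB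
    rw [Measure.map_apply hZmeas (hA.prod hB)]
    have hsplit : P (Z ⁻¹' (A ×ˢ B))
        = ∑ i : Fin N, P (Z ⁻¹' (A ×ˢ B) ∩ I ⁻¹' {i}) := by
      have hcover : Z ⁻¹' (A ×ˢ B) = ⋃ i : Fin N, (Z ⁻¹' (A ×ˢ B) ∩ I ⁻¹' {i}) := by
        ext ω
        simp only [Set.mem_iUnion, Set.mem_inter_iff, Set.mem_preimage,
          Set.mem_singleton_iff]
        exact ⟨fun h => ⟨I ω, h, rfl⟩, fun ⟨i, h, _⟩ => h⟩
      have hdisj : Pairwise (Function.onFun Disjoint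
          fun i : Fin N => Z ⁻¹' (A ×ˢ B) ∩ I ⁻¹' {i}) := by
        intro i j hij
        refine Set.disjoint_left.mpr fun ω hωi hωj => hij ?_
        have e1 : I ω = i := hωi.2
        have e2' : I ω = j := hωj.2
        rw [← e1, e2']
      conv_lhs => rw [hcover]
      rw [measure_iUnion hdisj (fun i =>
        (hZmeas (hA.prod hB)).inter (hImeas (measurableSet_singleton i))), tsum_fintype]
    rw [hsplit]
    have hper : ∀ i : Fin N, P (Z ⁻¹' (A ×ˢ B) ∩ I ⁻¹' {i})
        = P {ω | ((N:ℝ) * T i ω ∈ A ∧ Y i ω ∈ B) ∧ ∀ j, j ≠ i → T i ω < T j ω} := by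
      intro i
      apply measure_congr
      filter_upwards [hae_iff] with ω hω
      have hchar : ω ∈ Z ⁻¹' (A ×ˢ B) ∩ I ⁻¹' {i} ↔
          ω ∈ {ω | ((N:ℝ) * T i ω ∈ A ∧ Y i ω ∈ B) ∧ ∀ j, j ≠ i → T i ω < T j ω} := by
        simp only [Set.mem_inter_iff, Set.mem_preimage, Set.mem_singleton_iff,
          Set.mem_setOf_eq, Set.mem_prod, hZ]
        constructor
        · rintro ⟨⟨hA', hB'⟩, hIi⟩
          try dsimp only at hA' hB'
          rw [hIi] at hA' hB'
          exact ⟨⟨hA', hB'⟩, (hω i).mp hIi⟩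
        · rintro ⟨⟨hA', hB'⟩, hmin⟩
          have hIi : I ω = i := (hω i).mpr hmin
          refine ⟨⟨?_, ?_⟩, hIi⟩ <;> (try dsimp only) <;> rw [hIi]
          exacts [hA', hB']
      exact eq_iff_iff.mpr hchar
    calc ∑ i : Fin N, P (Z ⁻¹' (A ×ˢ B) ∩ I ⁻¹' {i})
        = ∑ _i : Fin N, ∫⁻ x : ℝ × S, Set.indicator {u : ℝ | (N:ℝ) * u ∈ A} e2 x.1
            * Set.indicator B 1 x.2 ∂(μT.prod ν) := by
          refine Finset.sum_congr rfl fun i _ => ?_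
          rw [hper i, hG i A B hA hB]
      _ = (N : ℝ≥0∞) * ∫⁻ x : ℝ × S, Set.indicator {u : ℝ | (N:ℝ) * u ∈ A} e2 x.1
            * Set.indicator B 1 x.2 ∂(μT.prod ν) := by
          rw [Finset.sum_const, Finset.card_univ, Fintype.card_fin, nsmul_eq_mul]
      _ = (μT.prod ν) (A ×ˢ B) := by
          have hNmul : Measurable fun u : ℝ => (N:ℝ) * u := measurable_id.const_mul _
          have hAset : MeasurableSet {u : ℝ | (N:ℝ) * u ∈ A} := hNmul hA
          rw [lintegral_prod_mul (he2meas.indicator hAset).aemeasurable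
            ((measurable_one.indicator hB)).aemeasurable,
            lintegral_indicator_one hB, Measure.prod_prod, ← mul_assoc, hkey A hA]
  -- assemble the four conclusions
  have hstmt1 : Measure.map Z P = Measure.map (X i0) P := by rw [hmain, hμ_prod]
  refine ⟨hstmt1, ?_, ?_, ?_⟩
  · intro t ht
    have hsetZ : {ω | t < (N:ℝ) * T (I ω) ω} = Z ⁻¹' (Set.Ioi t ×ˢ Set.univ) := by
      ext ω
      simp [hZ, Set.mem_prod]
    rw [hsetZ, ← Measure.map_apply hZmeas (measurableSet_Ioi.prod MeasurableSet.univ),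
      hmain, Measure.prod_prod, measure_univ, mul_one, hμT_Ioi, max_eq_left ht]
  · have hYZ : (fun ω => Y (I ω) ω) = Prod.snd ∘ Z := rfl
    rw [hYZ, ← Measure.map_map measurable_snd hZmeas, hmain, Measure.map_snd_prod,
      measure_univ, one_smul]
  · have hfst : Measure.map (fun ω => (N:ℝ) * T (I ω) ω) P = μT := by
      have h1 : (fun ω => (N:ℝ) * T (I ω) ω) = Prod.fst ∘ Z := rfl
      rw [h1, ← Measure.map_map measurable_fst hZmeas, hmain, Measure.map_fst_prod,
        measure_univ, one_smul]
    have hsnd : Measure.map (fun ω => Y (I ω) ω) P = ν := by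
      have h1 : (fun ω => Y (I ω) ω) = Prod.snd ∘ Z := rfl
      rw [h1, ← Measure.map_map measurable_snd hZmeas, hmain, Measure.map_snd_prod,
        measure_univ, one_smul]
    rw [indepFun_iff_map_prod_eq_prod_map_map (hTI.const_mul _).aemeasurable
      hYI.aemeasurable, hfst, hsnd]
    exact hmain
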